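/- For m = √(uz − vw) with uz − vw > 0, the matrix C = (1/m)·[[m², 0, 0, 0],[0, z, 0, −v],[0, 0, 1, 0],[0, −w, 0, u]] belongs to Sp(2,ℝ) and satisfies C H_{1,0} C^{−1} = H_{1,0}, C X_α C^{−1} = uX_α + vX_{α+β}, and C X_{α+β} C^{−1} = wX_α + zX_{α+β}. -/

import Mathlib

open Matrix

/-- `J = [[0, I₂], [−I₂, 0]]` as a `4×4` matrix. -/
def Jmat : Matrix (Fin 4) (Fin 4) ℝ :=
  !![0, 0, 1, 0; 0, 0, 0, 1; -1, 0, 0, 0; 0, -1, 0, 0]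

/-- `H_{1,0} = diag(1, 0, −1, 0)`. -/
def H10 : Matrix (Fin 4) (Fin 4) ℝ := Matrix.diagonal ![1, 0, -1, 0]

/-- Root vector `X_α`. -/
def Xa : Matrix (Fin 4) (Fin 4) ℝ :=
  !![0, 1, 0, 0; 0, 0, 0, 0; 0, 0, 0, 0; 0, 0, -1, 0]

/-- Root vector `X_{α+β}`. -/
def Xab : Matrix (Fin 4) (Fin 4) ℝ :=
  !![0, 0, 0, 1; 0, 0, 1, 0; 0, 0, 0, 0; 0, 0, 0, 0]

/-- The matrix `C = (1/m)·[[m²,0,0,0],[0,z,0,−v],[0,0,1,0],[0,−w,0,u]]` with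
`m = √(uz−vw)`. -/
noncomputable def Cmat (u v w z : ℝ) : Matrix (Fin 4) (Fin 4) ℝ :=
  (1 / Real.sqrt (u * z - v * w)) •
    !![u * z - v * w, 0, 0, 0; 0, z, 0, -v; 0, 0, 1, 0; 0, -w, 0, u]

/-- `H10` as an explicit matrix literal. -/
lemma H10_eq : H10 = !![1,0,0,0; 0,0,0,0; 0,0,-1,0; 0,0,0,0] := by
  ext i j
  fin_cases i <;> fin_cases j <;>
    simp [H10, Matrix.diagonal_apply, Matrix.vecHead, Matrix.vecTail]

/-- Explicit inverse of `Cmat`. -/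
noncomputable def Dmat (u v w z : ℝ) : Matrix (Fin 4) (Fin 4) ℝ :=
  (1 / Real.sqrt (u * z - v * w)) •
    !![1, 0, 0, 0; 0, u, 0, v; 0, 0, u * z - v * w, 0; 0, w, 0, z]

lemma inv_sqrt_sq (u v w z : ℝ) (h : 0 < u * z - v * w) :
    1 / Real.sqrt (u * z - v * w) * (1 / Real.sqrt (u * z - v * w))
      = 1 / (u * z - v * w) := by
  rw [div_mul_div_comm, one_mul, Real.mul_self_sqrt h.le]

lemma Cmat_mul_Dmat (u v w z : ℝ) (h : 0 < u * z - v * w) :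
    Cmat u v w z * Dmat u v w z = 1 := by
  have hk : u * z - v * w ≠ 0 := h.ne'
  rw [Cmat, Dmat, Matrix.smul_mul, Matrix.mul_smul, smul_smul, inv_sqrt_sq u v w z h]
  ext i j
  fin_cases i <;> fin_cases j <;>
    · simp [Matrix.mul_apply, Fin.sum_univ_four, Matrix.one_apply,
        Matrix.vecHead, Matrix.vecTail]
      try field_simp [hk]
      try ring
      try simp

lemma Cmat_inv (u v w z : ℝ) (h : 0 < u * z - v * w) :
    (Cmat u v w z)⁻¹ = Dmat u v w z :=
  Matrix.inv_eq_right_inv (Cmat_mul_Dmat u v w z h)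

set_option maxHeartbeats 3200000 in
/-- For `uz − vw > 0`, the matrix `C` is symplectic (`Cᵀ J C = J`) and conjugation
by `C` fixes `H_{1,0}` and sends `X_α ↦ uX_α + vX_{α+β}`, `X_{α+β} ↦ wX_α + zX_{α+β}`. -/
theorem Cmat_symplectic_conjugation (u v w z : ℝ) (h : 0 < u * z - v * w) :
    (Cmat u v w z)ᵀ * Jmat * Cmat u v w z = Jmat ∧
    Cmat u v w z * H10 * (Cmat u v w z)⁻¹ = H10 ∧
    Cmat u v w z * Xa * (Cmat u v w z)⁻¹ = u • Xa + v • Xab ∧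
    Cmat u v w z * Xab * (Cmat u v w z)⁻¹ = w • Xa + z • Xab := by
  have hk : u * z - v * w ≠ 0 := h.ne'
  rw [Cmat_inv u v w z h]
  refine ⟨?_, ?_, ?_, ?_⟩ <;>
    · simp only [Cmat, Dmat, H10_eq, Jmat, Xa, Xab, Matrix.transpose_smul,
        Matrix.smul_mul, Matrix.mul_smul, smul_smul]
      rw [inv_sqrt_sq u v w z h]
      ext i j
      fin_cases i <;> fin_cases j <;>
        · simp [Matrix.mul_apply, Fin.sum_univ_four, Matrix.one_apply,
            Matrix.vecHead, Matrix.vecTail]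
          try field_simp [hk]
          try ring
          try simp
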